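/- Let A = (Q, δ, I, F) be an NFA over α with finite state set Q, and let R₁, R₂ be relations on Q. If s₁, s₂, s₃ are least solutions to the transformation automata A[R₁], A[R₂], A[R₁ ∘ R₂] respectively, then s₁(id) * s₂(id) ⊴ s₃(id), where id is the identity relation on Q. -/

import Mathlib

/-- Homomorphic extension of `h : α → K` to regular expressions. -/
def interp {α : Type*} {K : Type*} [KleeneAlgebra K] (h : α → K) :
    RegularExpression α → K
  | .zero => 0
  | .epsilon => 1
  | .char a => h a
  | .plus e f => interp h e + interp h f
  | .comp e f => interp h e * interp h f
  | .star e => KStar.kstar (interp h e)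

universe u

set_option linter.unnecessarySimpa false

/-- `e ⊴ f`: under every interpretation into any Kleene algebra, `ĥ e ≤ ĥ f`. -/
def kle {α : Type*} (e f : RegularExpression α) : Prop :=
  ∀ (K : Type u) [KleeneAlgebra K] (h : α → K), interp h e ≤ interp h f

/-- Composition of relations: `(S ∘ T) q q'' ↔ ∃ q', S q q' ∧ T q' q''`. -/
def relComp {Q : Type*} (S T : Q → Q → Prop) : Q → Q → Prop :=
  fun q q'' => ∃ q', S q q' ∧ T q' q''

/-- The relation `δ_a = {(q, q') : q' ∈ δ q a}` induced by letter `a` in the NFA `A`. -/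
def deltaRel {α Q : Type*} (A : NFA α Q) (a : α) : Q → Q → Prop :=
  fun q q' => q' ∈ A.step q a

/-- A solution to the `R`-transformation automaton `A[R]`: its states are the relations on
`Q`, the sole accepting state is `R`, and each state `S` has an `a`-transition to
`S ∘ δ_a`. -/
def RelSolution {α Q : Type*} (A : NFA α Q) (R : Q → Q → Prop)
    (s : (Q → Q → Prop) → RegularExpression α) : Prop :=
  kle.{u} 1 (s R) ∧
  ∀ (S : Q → Q → Prop) (a : α),
    kle.{u} (RegularExpression.char a * s (relComp S (deltaRel A a))) (s S)

/-- A least solution to the transformation automaton `A[R]`. -/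
def LeastRelSolution {α Q : Type*} (A : NFA α Q) (R : Q → Q → Prop)
    (s : (Q → Q → Prop) → RegularExpression α) : Prop :=
  RelSolution.{u} A R s ∧
  ∀ s' : (Q → Q → Prop) → RegularExpression α, RelSolution.{u} A R s' →
    ∀ S : Q → Q → Prop, kle.{u} (s S) (s' S)

open Computability

section Aux

open RegularExpression

variable {α : Type*}

@[simp] lemma interp_zero {K : Type*} [KleeneAlgebra K] (h : α → K) :
    interp h (0 : RegularExpression α) = 0 := rfl
@[simp] lemma interp_one {K : Type*} [KleeneAlgebra K] (h : α → K) :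
    interp h (1 : RegularExpression α) = 1 := rfl
@[simp] lemma interp_char {K : Type*} [KleeneAlgebra K] (h : α → K) (a : α) :
    interp h (char a) = h a := rfl
@[simp] lemma interp_add {K : Type*} [KleeneAlgebra K] (h : α → K) (e f : RegularExpression α) :
    interp h (e + f) = interp h e + interp h f := rfl
@[simp] lemma interp_mul {K : Type*} [KleeneAlgebra K] (h : α → K) (e f : RegularExpression α) :
    interp h (e * f) = interp h e * interp h f := rfl
@[simp] lemma interp_star {K : Type*} [KleeneAlgebra K] (h : α → K) (e : RegularExpression α) :
    interp h (e.star) = (interp h e)∗ := rfl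

lemma kle_refl (e : RegularExpression α) : kle.{u} e e := fun _ _ _ => le_rfl

lemma kle_trans {e f g : RegularExpression α} (h1 : kle.{u} e f) (h2 : kle.{u} f g) :
    kle.{u} e g := fun K _ h => (h1 K h).trans (h2 K h)

lemma kle_mul {e₁ e₂ f₁ f₂ : RegularExpression α} (h1 : kle.{u} e₁ f₁) (h2 : kle.{u} e₂ f₂) :
    kle.{u} (e₁ * e₂) (f₁ * f₂) := by
  intro K _ h
  simp only [interp_mul]
  exact mul_le_mul' (h1 K h) (h2 K h)

/-- sum of a list of regular expressions -/
def rsum : List (RegularExpression α) → RegularExpression α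
  | [] => 0
  | e :: L => e + rsum L

lemma interp_le_rsum {K : Type*} [KleeneAlgebra K] (h : α → K)
    {L : List (RegularExpression α)} {e : RegularExpression α} (he : e ∈ L) :
    interp h e ≤ interp h (rsum L) := by
  induction L with
  | nil => cases he
  | cons f L ih =>
    rcases List.mem_cons.1 he with rfl | he'
    · simpa [rsum] using self_le_add_right _ _
    · simpa [rsum] using (ih he').trans (self_le_add_left _ _)

lemma rsum_mul_le {K : Type*} [KleeneAlgebra K] (h : α → K)
    {L : List (RegularExpression α)} {c z : K}
    (H : ∀ e ∈ L, interp h e * c ≤ z) : interp h (rsum L) * c ≤ z := by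
  induction L with
  | nil => simpa [rsum] using zero_le z
  | cons f L ih =>
    simp only [rsum, interp_add, add_mul]
    exact add_le (H f (by simp)) (ih fun e he => H e (by simp [he]))

lemma mul_rsum_le {K : Type*} [KleeneAlgebra K] (h : α → K)
    {L : List (RegularExpression α)} {y z : K}
    (H : ∀ e ∈ L, y * interp h e ≤ z) : y * interp h (rsum L) ≤ z := by
  induction L with
  | nil => simpa [rsum] using zero_le z
  | cons f L ih =>
    simp only [rsum, interp_add, mul_add]
    exact add_le (H f (by simp)) (ih fun e he => H e (by simp [he]))

end Aux

section Solve

variable {α : Type*} {ι : Type*} [DecidableEq ι]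

/-- one elimination step on the coefficient matrix -/
def elimM (m : ι → ι → RegularExpression α) (w : ι) : ι → ι → RegularExpression α :=
  fun S T => m S T + m S w * (m w w).star * m w T

/-- one elimination step on the constant vector -/
def elimB (m : ι → ι → RegularExpression α) (b : ι → RegularExpression α) (w : ι) :
    ι → RegularExpression α :=
  fun S => b S + m S w * (m w w).star * b w

/-- syntactic least solution of the right-linear system
`u S ≥ b S + Σ_{T ∈ l} m S T * u T`, by Gaussian elimination. -/
def solveL : List ι → (ι → ι → RegularExpression α) → (ι → RegularExpression α) →
    ι → RegularExpression α
  | [], _, b => b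
  | w :: ws, m, b => fun S =>
      if S = w then
        (m w w).star *
          (b w + rsum (ws.map fun T => m w T * solveL ws (elimM m w) (elimB m b w) T))
      else solveL ws (elimM m w) (elimB m b w) S

lemma solveL_cons_self (w : ι) (ws : List ι) (m : ι → ι → RegularExpression α)
    (b : ι → RegularExpression α) :
    solveL (w :: ws) m b w =
      (m w w).star *
        (b w + rsum (ws.map fun T => m w T * solveL ws (elimM m w) (elimB m b w) T)) := by
  simp [solveL]

lemma solveL_cons_ne (w : ι) (ws : List ι) (m : ι → ι → RegularExpression α)
    (b : ι → RegularExpression α) {S : ι} (hS : S ≠ w) :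
    solveL (w :: ws) m b S = solveL ws (elimM m w) (elimB m b w) S := by
  simp [solveL, hS]

lemma solveP1 : ∀ (l : List ι) (m : ι → ι → RegularExpression α)
    (b : ι → RegularExpression α) (S : ι), kle.{u} (b S) (solveL l m b S) := by
  intro l
  induction l with
  | nil => intro m b S; exact kle_refl _
  | cons w ws ih =>
    intro m b S
    by_cases hS : S = w
    · rw [hS, solveL_cons_self]
      intro K _ h
      simp only [interp_mul, interp_add, interp_star]
      exact (self_le_add_right _ _).trans (le_mul_of_one_le_left' one_le_kstar)
    · rw [solveL_cons_ne w ws m b hS]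
      refine kle_trans ?_ (ih (elimM m w) (elimB m b w) S)
      intro K _ h
      simp only [elimB, interp_add]
      exact self_le_add_right _ _

lemma solveP2 : ∀ (l : List ι) (m : ι → ι → RegularExpression α)
    (b : ι → RegularExpression α) (S T : ι), T ∈ l →
    kle.{u} (m S T * solveL l m b T) (solveL l m b S) := by
  intro l
  induction l with
  | nil => intro m b S T hT; cases hT
  | cons w ws ih =>
    intro m b S T hT
    by_cases hT' : T = w
    · rw [hT']
      by_cases hS : S = w
      · rw [hS, solveL_cons_self]
        intro K _ h
        simp only [interp_mul, interp_add, interp_star]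
        rw [← mul_assoc]
        exact mul_le_mul_left mul_kstar_le_kstar _
      · rw [solveL_cons_self, solveL_cons_ne w ws m b hS]
        intro K _ h
        have hP1 := solveP1.{u} ws (elimM m w) (elimB m b w) S K h
        simp only [interp_mul, interp_add, interp_star]
        rw [← mul_assoc, mul_add]
        apply add_le
        · refine le_trans ?_ hP1
          have hexp : interp h (elimB m b w S) =
              interp h (b S) + interp h (m S w) * (interp h (m w w))∗ * interp h (b w) := by
            simp [elimB]
          rw [hexp]
          exact self_le_add_left _ _
        · apply mul_rsum_le
          intro e he
          rcases List.mem_map.1 he with ⟨T', hT'', rfl⟩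
          have h2 := ih (elimM m w) (elimB m b w) S T' hT'' K h
          simp only [interp_mul] at h2 ⊢
          calc interp h (m S w) * (interp h (m w w))∗ *
                (interp h (m w T') * interp h (solveL ws (elimM m w) (elimB m b w) T'))
              = (interp h (m S w) * (interp h (m w w))∗ * interp h (m w T')) *
                interp h (solveL ws (elimM m w) (elimB m b w) T') := by
                rw [mul_assoc, mul_assoc, mul_assoc]
            _ ≤ interp h (elimM m w S T') *
                interp h (solveL ws (elimM m w) (elimB m b w) T') := by
                apply mul_le_mul_left
                simp only [elimM, interp_add, interp_mul, interp_star]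
                exact self_le_add_left _ _
            _ ≤ _ := h2
    · have hTws : T ∈ ws := by
        rcases List.mem_cons.1 hT with h' | h'
        · exact absurd h' hT'
        · exact h'
      rw [solveL_cons_ne w ws m b hT']
      by_cases hS : S = w
      · rw [hS, solveL_cons_self]
        intro K _ h
        simp only [interp_mul, interp_add, interp_star]
        have hmem : (m w T * solveL ws (elimM m w) (elimB m b w) T) ∈
            ws.map fun T' => m w T' * solveL ws (elimM m w) (elimB m b w) T' :=
          List.mem_map.2 ⟨T, hTws, rfl⟩
        have h1 := interp_le_rsum h hmem
        simp only [interp_mul] at h1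
        rw [← hS] at h1 ⊢
        exact h1.trans ((self_le_add_left _ _).trans (le_mul_of_one_le_left' one_le_kstar))
      · rw [solveL_cons_ne w ws m b hS]
        refine kle_trans ?_ (ih (elimM m w) (elimB m b w) S T hTws)
        apply kle_mul ?_ (kle_refl _)
        intro K _ h
        simp only [elimM, interp_add]
        exact self_le_add_right _ _

lemma solveP3 : ∀ (l : List ι) (m : ι → ι → RegularExpression α)
    (b : ι → RegularExpression α) (K : Type u) [KleeneAlgebra K], ∀ (h : α → K)
    (x : ι → K) (c : K),
    (∀ S T, T ∈ l → interp h (m S T) * x T ≤ x S) →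
    (∀ S, interp h (b S) * c ≤ x S) →
    ∀ S, interp h (solveL l m b S) * c ≤ x S := by
  intro l
  induction l with
  | nil => intro m b K _ h x c _ hb S; exact hb S
  | cons w ws ih =>
    intro m b K _ h x c hm hb
    have hA : interp h (m w w) * x w ≤ x w := hm w w (by simp)
    have hAs : (interp h (m w w))∗ * x w ≤ x w := kstar_mul_le_self hA
    have hm' : ∀ S T, T ∈ ws → interp h (elimM m w S T) * x T ≤ x S := by
      intro S T hT
      simp only [elimM, interp_add, interp_mul, interp_star, add_mul]
      apply add_le
      · exact hm S T (by simp [hT])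
      · calc interp h (m S w) * (interp h (m w w))∗ * interp h (m w T) * x T
            = interp h (m S w) * ((interp h (m w w))∗ * (interp h (m w T) * x T)) := by
              rw [mul_assoc, mul_assoc]
          _ ≤ interp h (m S w) * ((interp h (m w w))∗ * x w) :=
              mul_le_mul_right (mul_le_mul_right (hm w T (by simp [hT])) _) _
          _ ≤ interp h (m S w) * x w := mul_le_mul_right hAs _
          _ ≤ x S := hm S w (by simp)
    have hb' : ∀ S, interp h (elimB m b w S) * c ≤ x S := by
      intro S
      simp only [elimB, interp_add, interp_mul, interp_star, add_mul]
      apply add_le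
      · exact hb S
      · calc interp h (m S w) * (interp h (m w w))∗ * interp h (b w) * c
            = interp h (m S w) * ((interp h (m w w))∗ * (interp h (b w) * c)) := by
              rw [mul_assoc, mul_assoc]
          _ ≤ interp h (m S w) * ((interp h (m w w))∗ * x w) :=
              mul_le_mul_right (mul_le_mul_right (hb w) _) _
          _ ≤ interp h (m S w) * x w := mul_le_mul_right hAs _
          _ ≤ x S := hm S w (by simp)
    have hu' := ih (elimM m w) (elimB m b w) K h x c hm' hb'
    intro S
    by_cases hS : S = w
    · rw [hS, solveL_cons_self]
      simp only [interp_mul, interp_add, interp_star]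
      rw [mul_assoc]
      have hin : (interp h (b w) +
          interp h (rsum (ws.map fun T => m w T * solveL ws (elimM m w) (elimB m b w) T))) * c
          ≤ x w := by
        rw [add_mul]
        apply add_le
        · exact hb w
        · apply rsum_mul_le
          intro e he
          rcases List.mem_map.1 he with ⟨T, hT, rfl⟩
          simp only [interp_mul]
          calc interp h (m w T) * interp h (solveL ws (elimM m w) (elimB m b w) T) * c
              = interp h (m w T) * (interp h (solveL ws (elimM m w) (elimB m b w) T) * c) := by
                rw [mul_assoc]
            _ ≤ interp h (m w T) * x T := mul_le_mul_right (hu' T) _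
            _ ≤ x w := hm w T (by simp [hT])
      exact (mul_le_mul_right hin _).trans hAs
    · rw [solveL_cons_ne w ws m b hS]
      exact hu' S

end Solve
section Model

open RegularExpression

variable {α : Type*}

/-- letters occurring in a regular expression -/
def lets : RegularExpression α → List α
  | .zero => []
  | .epsilon => []
  | .char a => [a]
  | .plus e f => lets e ++ lets f
  | .comp e f => lets e ++ lets f
  | .star e => lets e

/-- the word `a₁…aₙ` as a regular expression -/
def mword : List α → RegularExpression α
  | [] => 1
  | a :: w => char a * mword w

open scoped Classical in
/-- interpretation sending `a` to `{[true]}` and all other letters to `{[false]}` -/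
noncomputable def hma (a : α) : α → Language (ULift.{u} Bool) :=
  fun b => {[ULift.up (if b = a then true else false)]}

lemma no_true (a : α) : ∀ (e : RegularExpression α), a ∉ lets e →
    ∀ l ∈ interp (hma.{u} a) e, ULift.up true ∉ l := by
  intro e
  induction e with
  | zero => intro _ l hl; exact hl.elim
  | epsilon =>
    intro _ l hl
    rw [show l = [] from hl]
    simp
  | char b =>
    intro ha l hl
    have hab : ¬ a = b := by simpa [lets] using ha
    have hba : ¬ b = a := fun h => hab h.symm
    have : l = [ULift.up false] := by
      simp [hma, if_neg hba] at hl
      exact hl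
    rw [this]
    simp
  | plus e f ihe ihf =>
    intro ha l hl
    have hae : a ∉ lets e := fun h => ha (by simp [lets, h])
    have haf : a ∉ lets f := fun h => ha (by simp [lets, h])
    rcases hl with hl | hl
    · exact ihe hae l hl
    · exact ihf haf l hl
  | comp e f ihe ihf =>
    intro ha l hl
    have hae : a ∉ lets e := fun h => ha (by simp [lets, h])
    have haf : a ∉ lets f := fun h => ha (by simp [lets, h])
    rcases Language.mem_mul.1 hl with ⟨x, hx, y, hy, rfl⟩
    intro hmem
    rcases List.mem_append.1 hmem with h' | h'
    · exact ihe hae x hx h'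
    · exact ihf haf y hy h'
  | star e ihe =>
    intro ha l hl
    rcases Language.mem_kstar.1 hl with ⟨L, rfl, hL⟩
    intro hmem
    rcases List.mem_flatten.1 hmem with ⟨y, hy, hmy⟩
    exact ihe (by simpa [lets] using ha) y (hL y hy) hmy

lemma exists_mem_mword (a : α) : ∀ w : List α, ∃ l, l ∈ interp (hma.{u} a) (mword w) := by
  intro w
  induction w with
  | nil => exact ⟨[], by simp [mword, Language.mem_one]⟩
  | cons b w ih =>
    obtain ⟨l, hl⟩ := ih
    classical
    refine ⟨[ULift.up (if b = a then true else false)] ++ l, ?_⟩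
    simp only [mword, interp_mul, interp_char]
    exact Language.append_mem_mul rfl hl

end Model

section Automaton

variable {α Q : Type*}

/-- action of a word on a relation through the transformation automaton -/
def wAct (A : NFA α Q) : (Q → Q → Prop) → List α → (Q → Q → Prop)
  | T, [] => T
  | T, a :: w => wAct A (relComp T (deltaRel A a)) w

lemma mword_kle {A : NFA α Q} {R : Q → Q → Prop} {s : (Q → Q → Prop) → RegularExpression α}
    (h1 : kle.{u} 1 (s R))
    (h2 : ∀ S a, kle.{u} (RegularExpression.char a * s (relComp S (deltaRel A a))) (s S)) :
    ∀ (w : List α) (T), wAct A T w = R → kle.{u} (mword w) (s T) := by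
  intro w
  induction w with
  | nil =>
    intro T hT
    have : T = R := hT
    rw [this]
    exact h1
  | cons a w ih =>
    intro T hT
    exact kle_trans (kle_mul (kle_refl (RegularExpression.char a)) (ih _ hT)) (h2 T a)

lemma dead_letter {A : NFA α Q} {R₁ : Q → Q → Prop} {s₁ : (Q → Q → Prop) → RegularExpression α}
    (h1 : kle.{u} 1 (s₁ R₁))
    (h2 : ∀ S a, kle.{u} (RegularExpression.char a * s₁ (relComp S (deltaRel A a))) (s₁ S))
    {S : Q → Q → Prop} {a : α} (ha : a ∉ lets (s₁ S)) {w : List α}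
    (hw : wAct A (relComp S (deltaRel A a)) w = R₁) : False := by
  have hkw : kle.{u} (mword w) (s₁ (relComp S (deltaRel A a))) := mword_kle h1 h2 w _ hw
  have hk : kle.{u} (RegularExpression.char a * mword w) (s₁ S) :=
    kle_trans (kle_mul (kle_refl _) hkw) (h2 S a)
  obtain ⟨l, hl⟩ := exists_mem_mword.{u} a w
  have h3 := hk (Language (ULift.{u} Bool)) (hma.{u} a)
  have hmem : (ULift.up true :: l) ∈ interp (hma.{u} a) (RegularExpression.char a * mword w) := by
    simp only [interp_mul, interp_char]
    have he : hma.{u} a a = {[ULift.up true]} := by simp [hma]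
    rw [he]
    have hstep : ([ULift.up true] ++ l) ∈
        ({[ULift.up true]} : Language (ULift.{u} Bool)) * interp (hma.{u} a) (mword w) :=
      Language.append_mem_mul rfl hl
    simpa using hstep
  exact no_true.{u} a (s₁ S) ha _ (h3 hmem) (by simp)

end Automaton

section Rel

variable {Q : Type*}

lemma relComp_assoc (X Y Z : Q → Q → Prop) :
    relComp (relComp X Y) Z = relComp X (relComp Y Z) := by
  funext q q''
  apply propext
  constructor
  · rintro ⟨p, ⟨r, hr1, hr2⟩, hp⟩
    exact ⟨r, hr1, p, hr2, hp⟩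
  · rintro ⟨r, hr, p, hp1, hp2⟩
    exact ⟨p, ⟨r, hr, hp1⟩, hp2⟩

lemma relComp_eq_right (X : Q → Q → Prop) : relComp X Eq = X := by
  funext q q''
  apply propext
  constructor
  · rintro ⟨p, hp, rfl⟩
    exact hp
  · intro h
    exact ⟨q'', h, rfl⟩

end Rel

section Matrix

open scoped Classical

variable {α Q : Type*}

/-- transition-matrix entry of the transformation automaton, restricted to letters in `F` -/
noncomputable def mMat (A : NFA α Q) (F : List α) (S T : Q → Q → Prop) :
    RegularExpression α :=
  rsum (F.map fun a =>
    if relComp S (deltaRel A a) = T then RegularExpression.char a else 0)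

/-- the accepting vector: `1` at `R₁`, `0` elsewhere -/
noncomputable def bVec (R₁ S : Q → Q → Prop) : RegularExpression α :=
  if S = R₁ then 1 else 0

lemma char_le_mMat (A : NFA α Q) {F : List α} {S : Q → Q → Prop} {a : α} (ha : a ∈ F) :
    kle.{u} (RegularExpression.char a) (mMat A F S (relComp S (deltaRel A a))) := by
  have he : (RegularExpression.char a) ∈ F.map (fun a' =>
      if relComp S (deltaRel A a') = relComp S (deltaRel A a) then RegularExpression.char a'
      else (0 : RegularExpression α)) :=
    List.mem_map.2 ⟨a, ha, by rw [if_pos rfl]⟩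
  intro K _ h
  exact interp_le_rsum h he

lemma mMat_mul_le {K : Type*} [KleeneAlgebra K] (h : α → K) (A : NFA α Q) (F : List α)
    (x : (Q → Q → Prop) → K)
    (hx : ∀ S a, h a * x (relComp S (deltaRel A a)) ≤ x S) (S T : Q → Q → Prop) :
    interp h (mMat A F S T) * x T ≤ x S := by
  apply rsum_mul_le
  intro e he
  rcases List.mem_map.1 he with ⟨a, _, rfl⟩
  by_cases hc : relComp S (deltaRel A a) = T
  · rw [if_pos hc]
    simp only [interp_char]
    rw [← hc]
    exact hx S a
  · rw [if_neg hc]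
    simpa using zero_le (x S)

end Matrix

/-- Composing solutions of transformation automata:
`sol_{A[R₁]}(id) * sol_{A[R₂]}(id) ⊴ sol_{A[R₁ ∘ R₂]}(id)`. -/
theorem transformation_solution_compose {α : Type*} {Q : Type*} [Finite Q]
    (A : NFA α Q) (R₁ R₂ : Q → Q → Prop)
    (s₁ s₂ s₃ : (Q → Q → Prop) → RegularExpression α)
    (hs₁ : LeastRelSolution.{u} A R₁ s₁) (hs₂ : LeastRelSolution.{u} A R₂ s₂)
    (hs₃ : LeastRelSolution.{u} A (relComp R₁ R₂) s₃) :
    kle.{u} (s₁ Eq * s₂ Eq) (s₃ Eq) := by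
  classical
  obtain ⟨hsol₁, hleast₁⟩ := hs₁
  obtain ⟨hsol₂, hleast₂⟩ := hs₂
  obtain ⟨hsol₃, -⟩ := hs₃
  -- Step 1: `s₂ Eq ⊴ s₃ R₁`, by leastness of `s₂` against `T ↦ s₃ (R₁ ∘ T)`.
  have step1 : kle.{u} (s₂ Eq) (s₃ R₁) := by
    have ht : RelSolution.{u} A R₂ (fun T => s₃ (relComp R₁ T)) := by
      constructor
      · exact hsol₃.1
      · intro T a
        have h2 := hsol₃.2 (relComp R₁ T) a
        rw [relComp_assoc R₁ T (deltaRel A a)] at h2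
        exact h2
    have h3 := hleast₂ _ ht Eq
    rw [relComp_eq_right R₁] at h3
    exact h3
  -- Finiteness of the state space of the transformation automaton.
  haveI : Fintype (Q → Q → Prop) := Fintype.ofFinite _
  set univList : List (Q → Q → Prop) := Finset.univ.toList with huL
  have hmemU : ∀ T : Q → Q → Prop, T ∈ univList := fun T => by
    simp [huL, Finset.mem_toList]
  -- Letters of `s₁`.
  set F : List α := (univList.map fun S => lets (s₁ S)).flatten with hF
  have hFsub : ∀ (S : Q → Q → Prop) (a : α), a ∈ lets (s₁ S) → a ∈ F := by
    intro S a ha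
    rw [hF]
    exact List.mem_flatten.2 ⟨_, List.mem_map.2 ⟨S, hmemU S, rfl⟩, ha⟩
  -- The trimmed syntactic solution `u`.
  set u : (Q → Q → Prop) → RegularExpression α := fun S =>
    if ∃ w : List α, wAct A S w = R₁ then solveL univList (mMat A F) (bVec R₁) S else 0
    with hu
  have hliveR₁ : ∃ w : List α, wAct A R₁ w = R₁ := ⟨[], rfl⟩
  have husol : RelSolution.{u} A R₁ u := by
    constructor
    · rw [hu]
      simp only [if_pos hliveR₁]
      have h4 := solveP1.{u} univList (mMat A F) (bVec R₁) R₁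
      rw [show (bVec R₁ R₁ : RegularExpression α) = 1 from if_pos rfl] at h4
      exact h4
    · intro S a
      by_cases hl : ∃ w : List α, wAct A (relComp S (deltaRel A a)) w = R₁
      · have hlS : ∃ w : List α, wAct A S w = R₁ := by
          obtain ⟨w, hw⟩ := hl
          exact ⟨a :: w, hw⟩
        by_cases haF : a ∈ F
        · rw [hu]
          simp only [if_pos hl, if_pos hlS]
          exact kle_trans
            (kle_mul (char_le_mMat.{u} A haF) (kle_refl _))
            (solveP2.{u} univList (mMat A F) (bVec R₁) S _ (hmemU _))
        · exfalso
          obtain ⟨w, hw⟩ := hl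
          exact dead_letter.{u} hsol₁.1 hsol₁.2 (fun hIn => haF (hFsub S a hIn)) hw
      · rw [hu]
        simp only [if_neg hl]
        intro K _ h
        simp only [interp_mul, interp_zero, mul_zero]
        exact zero_le
  have hukle := hleast₁ u husol
  -- Final assembly in an arbitrary Kleene algebra.
  intro K instK h
  have hx : ∀ (S : Q → Q → Prop) (a : α),
      h a * interp h (s₃ (relComp S (deltaRel A a))) ≤ interp h (s₃ S) := by
    intro S a
    have h5 := hsol₃.2 S a K h
    simpa using h5
  have hbcond : ∀ S : Q → Q → Prop,
      interp h (bVec R₁ S) * interp h (s₃ R₁) ≤ interp h (s₃ S) := by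
    intro S
    by_cases hS : S = R₁
    · rw [hS, show (bVec R₁ R₁ : RegularExpression α) = 1 from if_pos rfl]
      simp
    · rw [show (bVec R₁ S : RegularExpression α) = 0 from if_neg hS]
      simpa using zero_le _
  have hP3 := solveP3.{u} univList (mMat A F) (bVec R₁) K h
    (fun T => interp h (s₃ T)) (interp h (s₃ R₁))
    (fun S T _ => mMat_mul_le h A F (fun T' => interp h (s₃ T')) hx S T) hbcond
  have hC : interp h (u Eq) * interp h (s₃ R₁) ≤ interp h (s₃ Eq) := by
    rw [hu]
    by_cases hl : ∃ w : List α, wAct A (Eq : Q → Q → Prop) w = R₁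
    · simp only [if_pos hl]
      exact hP3 Eq
    · simp only [if_neg hl]
      simpa using zero_le _
  calc interp h (s₁ Eq * s₂ Eq) = interp h (s₁ Eq) * interp h (s₂ Eq) := rfl
    _ ≤ interp h (u Eq) * interp h (s₃ R₁) := mul_le_mul' (hukle Eq K h) (step1 K h)
    _ ≤ interp h (s₃ Eq) := hC
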